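/- Let φ : ℝ → ℝ be continuous and 2π-periodic with zero mean. Then the function u(x) := (K∗φ)(x) is twice continuously differentiable on ℝ and satisfies u″(x) = −φ(x) for all x ∈ ℝ. -/

import Mathlib

open Real MeasureTheory Filter

/-- The 2π-periodic kernel of `D⁻²`, equal to `(1/(4π))(|x|−π)² − π/12` on `[−π,π]`. -/
noncomputable def Kper (x : ℝ) : ℝ :=
  (1 / (4 * π)) * (|x - 2 * π * ((round (x / (2 * π)) : ℤ) : ℝ)| - π) ^ 2 - π / 12

/-- Periodic convolution with the kernel `Kper`. -/
noncomputable def Kconv (φ : ℝ → ℝ) (x : ℝ) : ℝ :=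
  ∫ y in (-π)..π, Kper (x - y) * φ y

lemma Kper_periodic : Function.Periodic Kper (2 * π) := by
  intro x
  unfold Kper
  have hπ : (2 * π) ≠ 0 := by positivity
  have h2 : (x + 2 * π) / (2 * π) = x / (2 * π) + ((1 : ℤ) : ℝ) := by
    push_cast; field_simp
  rw [h2, round_add_intCast]
  have h3 : x + 2 * π - 2 * π * ((round (x / (2 * π)) + 1 : ℤ) : ℝ)
      = x - 2 * π * ((round (x / (2 * π)) : ℤ) : ℝ) := by push_cast; ring
  rw [h3]

lemma Kper_eq {z : ℝ} (h1 : -π ≤ z) (h2 : z ≤ π) :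
    Kper z = 1 / (4 * π) * (|z| - π) ^ 2 - π / 12 := by
  rcases eq_or_lt_of_le h2 with rfl | h2
  · unfold Kper
    have hπ : (0 : ℝ) < π := pi_pos
    have : π / (2 * π) = ((1 : ℝ) / 2) := by field_simp
    rw [this]
    have hr : round ((1 : ℝ) / 2) = 1 := by
      rw [round_eq]; norm_num
    rw [hr]
    have : |π - 2 * π * ((1 : ℤ) : ℝ)| = π := by
      push_cast; rw [show π - 2 * π * 1 = -π by ring, abs_neg, abs_of_pos hπ]
    rw [this, abs_of_pos hπ]
  · have hπ : (0 : ℝ) < 2 * π := by positivity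
    have hr : round (z / (2 * π)) = 0 := by
      rw [round_eq_zero_iff, Set.mem_Ico]
      constructor
      · rw [le_div_iff₀ hπ]; linarith
      · rw [div_lt_iff₀ hπ]; linarith
    unfold Kper
    rw [hr]
    push_cast
    ring_nf

lemma Kper_bound (z : ℝ) : |Kper z| ≤ π / 3 := by
  have hπ : (0 : ℝ) < π := pi_pos
  have h1 : |z - 2 * π * ((round (z / (2 * π)) : ℤ) : ℝ)| ≤ π := by
    have h := abs_sub_round (z / (2 * π))
    have h2 : z - 2 * π * ((round (z / (2 * π)) : ℤ) : ℝ)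
        = (2 * π) * (z / (2 * π) - ((round (z / (2 * π)) : ℤ) : ℝ)) := by
      field_simp
    rw [h2, abs_mul, abs_of_pos (by positivity : (0:ℝ) < 2 * π)]
    calc 2 * π * |z / (2 * π) - ((round (z / (2 * π)) : ℤ) : ℝ)| ≤ 2 * π * (1 / 2) := by
          exact mul_le_mul_of_nonneg_left h (by positivity)
      _ = π := by ring
  set w := |z - 2 * π * ((round (z / (2 * π)) : ℤ) : ℝ)| with hw
  have h0 : 0 ≤ w := abs_nonneg _
  have hsq : (w - π) ^ 2 ≤ π ^ 2 := by nlinarith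
  have hmul : (1 / (4 * π)) * (w - π) ^ 2 ≤ (1 / (4 * π)) * π ^ 2 :=
    mul_le_mul_of_nonneg_left hsq (by positivity)
  have he : (1 / (4 * π)) * π ^ 2 = π / 4 := by field_simp
  have hnn : 0 ≤ (1 / (4 * π)) * (w - π) ^ 2 := by positivity
  unfold Kper
  rw [← hw, abs_le]
  constructor <;> [linarith; linarith [hmul.trans_eq he]]

lemma Kper_measurable : Measurable Kper := by
  unfold Kper
  have h1 : Measurable fun x : ℝ => ((round (x / (2 * π)) : ℤ) : ℝ) := by
    apply measurable_from_top.comp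
    simp only [round_eq]
    exact Measurable.floor ((measurable_id.div_const _).add_const _)
  apply Measurable.sub _ measurable_const
  apply Measurable.const_mul
  apply Measurable.pow _ measurable_const
  exact ((measurable_id.sub (h1.const_mul _)).abs.sub measurable_const)

lemma Kconv_integrand_intInt (φ : ℝ → ℝ) (hφc : Continuous φ) (x a b : ℝ) :
    IntervalIntegrable (fun y => Kper (x - y) * φ y) volume a b := by
  obtain ⟨C, hC⟩ := (isCompact_uIcc (a := a) (b := b)).exists_bound_of_continuousOn
    hφc.continuousOn
  apply IntervalIntegrable.mono_fun' (g := fun _ => (π / 3) * C) intervalIntegrable_const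
  · exact ((Kper_measurable.comp (measurable_const.sub measurable_id)).mul
      hφc.measurable).aestronglyMeasurable
  · filter_upwards [ae_restrict_mem measurableSet_uIoc] with y hy
    have h1 := Kper_bound (x - y)
    have h2 := hC y (Set.uIoc_subset_uIcc hy)
    simp only [Real.norm_eq_abs] at h2 ⊢
    rw [abs_mul]
    exact mul_le_mul h1 h2 (abs_nonneg _) (by positivity)

/-- Primitive from `0`. -/
noncomputable def Pf (φ : ℝ → ℝ) (t : ℝ) : ℝ := ∫ s in (0:ℝ)..t, φ s

lemma Pf_hasDerivAt {φ : ℝ → ℝ} (hφc : Continuous φ) (t : ℝ) :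
    HasDerivAt (Pf φ) (φ t) t :=
  intervalIntegral.integral_hasDerivAt_right (hφc.intervalIntegrable 0 t)
    (hφc.stronglyMeasurableAtFilter volume (nhds t)) hφc.continuousAt

lemma Pf_sub {φ : ℝ → ℝ} (hφc : Continuous φ) (a b : ℝ) :
    (∫ y in a..b, φ y) = Pf φ b - Pf φ a := by
  rw [eq_sub_iff_add_eq, add_comm]
  exact intervalIntegral.integral_add_adjacent_intervals (hφc.intervalIntegrable 0 a)
    (hφc.intervalIntegrable a b)

lemma poly_integral {φ : ℝ → ℝ} (hφc : Continuous φ) (a b c0 c1 c2 : ℝ) :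
    (∫ y in a..b, (c0 + c1 * y + c2 * y ^ 2) * φ y)
      = c0 * (Pf φ b - Pf φ a) + c1 * (Pf (fun s => s * φ s) b - Pf (fun s => s * φ s) a)
        + c2 * (Pf (fun s => s ^ 2 * φ s) b - Pf (fun s => s ^ 2 * φ s) a) := by
  have hc1 : Continuous fun s : ℝ => s * φ s := continuous_id.mul hφc
  have hc2 : Continuous fun s : ℝ => s ^ 2 * φ s := (continuous_pow 2).mul hφc
  have h : Set.EqOn (fun y => (c0 + c1 * y + c2 * y ^ 2) * φ y)
      (fun y => c0 * φ y + (c1 * (y * φ y) + c2 * (y ^ 2 * φ y))) (Set.uIcc a b) := by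
    intro y _; simp only; ring
  rw [intervalIntegral.integral_congr h,
    intervalIntegral.integral_add ((hφc.intervalIntegrable a b).const_mul c0)
      (((hc1.intervalIntegrable a b).const_mul c1).add
        ((hc2.intervalIntegrable a b).const_mul c2)),
    intervalIntegral.integral_add ((hc1.intervalIntegrable a b).const_mul c1)
      ((hc2.intervalIntegrable a b).const_mul c2),
    intervalIntegral.integral_const_mul, intervalIntegral.integral_const_mul,
    intervalIntegral.integral_const_mul, Pf_sub hφc, Pf_sub hc1, Pf_sub hc2]
  ring

/-- Explicit form of the convolution. -/
noncomputable def Efun (φ : ℝ → ℝ) (x : ℝ) : ℝ :=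
  (x ^ 2 / (4 * π) - x / 2 + π / 6) * (Pf φ x - Pf φ (x - π))
  + (1 / 2 - x / (2 * π)) * (Pf (fun s => s * φ s) x - Pf (fun s => s * φ s) (x - π))
  + (1 / (4 * π)) * (Pf (fun s => s ^ 2 * φ s) x - Pf (fun s => s ^ 2 * φ s) (x - π))
  + (x ^ 2 / (4 * π) + x / 2 + π / 6) * (Pf φ (x + π) - Pf φ x)
  + (-(1 / 2) - x / (2 * π)) * (Pf (fun s => s * φ s) (x + π) - Pf (fun s => s * φ s) x)
  + (1 / (4 * π)) * (Pf (fun s => s ^ 2 * φ s) (x + π) - Pf (fun s => s ^ 2 * φ s) x)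

/-- Derivative of the explicit form. -/
noncomputable def Gfun (φ : ℝ → ℝ) (x : ℝ) : ℝ :=
  Pf φ (x + π) - Pf φ x
    - (Pf (fun s => s * φ s) (x + π) - Pf (fun s => s * φ s) (x - π)) / (2 * π)

lemma Kconv_eq (φ : ℝ → ℝ) (hφc : Continuous φ) (hφp : Function.Periodic φ (2 * π)) :
    ∀ x, Kconv φ x = Efun φ x := by
  intro x
  have hπ : (0 : ℝ) < π := pi_pos
  unfold Kconv
  have hper : Function.Periodic (fun y => Kper (x - y) * φ y) (2 * π) := by
    intro y
    simp only
    rw [hφp y, show x - (y + 2 * π) = (x - y) - 2 * π by ring, Kper_periodic.sub_eq]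
  have hshift : (∫ y in (-π)..π, Kper (x - y) * φ y)
      = ∫ y in (x - π)..(x + π), Kper (x - y) * φ y := by
    have h := hper.intervalIntegral_add_eq (-π) (x - π)
    rw [show -π + 2 * π = π by ring, show x - π + 2 * π = x + π by ring] at h
    exact h
  rw [hshift,
    ← intervalIntegral.integral_add_adjacent_intervals (a := x - π) (b := x) (c := x + π)
      (Kconv_integrand_intInt φ hφc x _ _) (Kconv_integrand_intInt φ hφc x _ _)]
  have e1 : (∫ y in (x - π)..x, Kper (x - y) * φ y)
      = ∫ y in (x - π)..x, ((x ^ 2 / (4 * π) - x / 2 + π / 6)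
          + (1 / 2 - x / (2 * π)) * y + (1 / (4 * π)) * y ^ 2) * φ y := by
    apply intervalIntegral.integral_congr
    intro y hy
    rw [Set.uIcc_of_le (by linarith)] at hy
    obtain ⟨hy1, hy2⟩ := hy
    beta_reduce
    rw [Kper_eq (by linarith) (by linarith), abs_of_nonneg (by linarith : (0:ℝ) ≤ x - y)]
    have hπ' : π ≠ 0 := pi_ne_zero
    congr 1
    field_simp
    ring
  have e2 : (∫ y in x..(x + π), Kper (x - y) * φ y)
      = ∫ y in x..(x + π), ((x ^ 2 / (4 * π) + x / 2 + π / 6)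
          + (-(1 / 2) - x / (2 * π)) * y + (1 / (4 * π)) * y ^ 2) * φ y := by
    apply intervalIntegral.integral_congr
    intro y hy
    rw [Set.uIcc_of_le (by linarith)] at hy
    obtain ⟨hy1, hy2⟩ := hy
    beta_reduce
    rw [Kper_eq (by linarith) (by linarith), abs_of_nonpos (by linarith : x - y ≤ 0)]
    have hπ' : π ≠ 0 := pi_ne_zero
    congr 1
    field_simp
    ring
  rw [e1, e2, poly_integral hφc, poly_integral hφc]
  unfold Efun
  ring

/-- If `φ` is continuous, 2π-periodic with zero mean, then `K∗φ` is `C²` with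
`(K∗φ)″ = −φ`. -/
theorem Kconv_C2 (φ : ℝ → ℝ) (hφc : Continuous φ) (hφp : Function.Periodic φ (2 * π))
    (hφ0 : (∫ y in (-π)..π, φ y) = 0) :
    ContDiff ℝ 2 (Kconv φ) ∧ ∀ x, deriv (deriv (Kconv φ)) x = -φ x := by
  have hπ : (0 : ℝ) < π := pi_pos
  have hπ' : π ≠ 0 := pi_ne_zero
  have hc1 : Continuous fun s : ℝ => s * φ s := continuous_id.mul hφc
  have hc2 : Continuous fun s : ℝ => s ^ 2 * φ s := (continuous_pow 2).mul hφc
  -- periodicity facts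
  have hφshift : ∀ x : ℝ, φ (x + π) = φ (x - π) := by
    intro x
    have h := hφp (x - π)
    rw [show x - π + 2 * π = x + π by ring] at h
    exact h
  have hΦshift : ∀ x : ℝ, Pf φ (x + π) = Pf φ (x - π) := by
    intro x
    have h1 : (∫ y in (x - π)..(x + π), φ y) = 0 := by
      have h := hφp.intervalIntegral_add_eq (x - π) (-π)
      rw [show x - π + 2 * π = x + π by ring, show -π + 2 * π = π by ring] at h
      rw [h, hφ0]
    rw [Pf_sub hφc] at h1
    linarith
  -- derivatives of shifted primitives
  have shiftD : ∀ (ψ : ℝ → ℝ), Continuous ψ → ∀ x : ℝ,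
      HasDerivAt (fun t => Pf ψ (t + π)) (ψ (x + π)) x := by
    intro ψ hψ x
    have h1 := Pf_hasDerivAt hψ (x + π)
    have h2 : HasDerivAt (fun t : ℝ => t + π) 1 x := (hasDerivAt_id x).add_const π
    simpa [Function.comp_def] using h1.comp x h2
  have shiftDm : ∀ (ψ : ℝ → ℝ), Continuous ψ → ∀ x : ℝ,
      HasDerivAt (fun t => Pf ψ (t - π)) (ψ (x - π)) x := by
    intro ψ hψ x
    have h1 := Pf_hasDerivAt hψ (x - π)
    have h2 : HasDerivAt (fun t : ℝ => t - π) 1 x := (hasDerivAt_id x).sub_const π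
    simpa [Function.comp_def] using h1.comp x h2
  -- derivative of Efun
  have hE : ∀ x, HasDerivAt (Efun φ) (Gfun φ x) x := by
    intro x
    have d0 := Pf_hasDerivAt hφc x
    have d1 := Pf_hasDerivAt hc1 x
    have d2 := Pf_hasDerivAt hc2 x
    have d0p := shiftD φ hφc x
    have d0m := shiftDm φ hφc x
    have d1p := shiftD _ hc1 x
    have d1m := shiftDm _ hc1 x
    have d2p := shiftD _ hc2 x
    have d2m := shiftDm _ hc2 x
    have hco1 : HasDerivAt (fun t : ℝ => t ^ 2 / (4 * π) - t / 2 + π / 6)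
        (x / (2 * π) - 1 / 2) x := by
      have h := (((hasDerivAt_pow 2 x).div_const (4 * π)).sub
        ((hasDerivAt_id x).div_const 2)).add_const (π / 6)
      convert h using 1
      rfl; rfl; rfl
      push_cast
      field_simp
      ring
    have hco2 : HasDerivAt (fun t : ℝ => 1 / 2 - t / (2 * π)) (-(1 / (2 * π))) x := by
      have h := HasDerivAt.const_sub (1 / 2) ((hasDerivAt_id x).div_const (2 * π))
      convert h using 1
      rfl; rfl; rfl
    have hco4 : HasDerivAt (fun t : ℝ => t ^ 2 / (4 * π) + t / 2 + π / 6)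
        (x / (2 * π) + 1 / 2) x := by
      have h := (((hasDerivAt_pow 2 x).div_const (4 * π)).add
        ((hasDerivAt_id x).div_const 2)).add_const (π / 6)
      convert h using 1
      rfl; rfl; rfl
      push_cast
      field_simp
      ring
    have hco5 : HasDerivAt (fun t : ℝ => -(1 / 2) - t / (2 * π)) (-(1 / (2 * π))) x := by
      have h := HasDerivAt.const_sub (-(1 / 2)) ((hasDerivAt_id x).div_const (2 * π))
      convert h using 1
      rfl; rfl; rfl
    have t1 := hco1.mul (d0.sub d0m)
    have t2 := hco2.mul (d1.sub d1m)
    have t3 := (d2.sub d2m).const_mul (1 / (4 * π))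
    have t4 := hco4.mul (d0p.sub d0)
    have t5 := hco5.mul (d1p.sub d1)
    have t6 := (d2p.sub d2).const_mul (1 / (4 * π))
    have H := ((((t1.add t2).add t3).add t4).add t5).add t6
    have hval : (x / (2 * π) - 1 / 2) * (Pf φ x - Pf φ (x - π))
          + (x ^ 2 / (4 * π) - x / 2 + π / 6) * (φ x - φ (x - π))
        + (-(1 / (2 * π)) * (Pf (fun s => s * φ s) x - Pf (fun s => s * φ s) (x - π))
          + (1 / 2 - x / (2 * π)) * (x * φ x - (x - π) * φ (x - π)))
        + 1 / (4 * π) * (x ^ 2 * φ x - (x - π) ^ 2 * φ (x - π))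
        + ((x / (2 * π) + 1 / 2) * (Pf φ (x + π) - Pf φ x)
          + (x ^ 2 / (4 * π) + x / 2 + π / 6) * (φ (x + π) - φ x))
        + (-(1 / (2 * π)) * (Pf (fun s => s * φ s) (x + π) - Pf (fun s => s * φ s) x)
          + (-(1 / 2) - x / (2 * π)) * ((x + π) * φ (x + π) - x * φ x))
        + 1 / (4 * π) * ((x + π) ^ 2 * φ (x + π) - x ^ 2 * φ x) = Gfun φ x := by
      unfold Gfun
      rw [hφshift x, hΦshift x]
      field_simp
      ring
    rw [← hval]
    exact H
  -- derivative of Gfun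
  have hG : ∀ x, HasDerivAt (Gfun φ) (-φ x) x := by
    intro x
    have d0 := Pf_hasDerivAt hφc x
    have d0p := shiftD φ hφc x
    have d1p := shiftD _ hc1 x
    have d1m := shiftDm _ hc1 x
    have H := (d0p.sub d0).sub ((d1p.sub d1m).div_const (2 * π))
    have hval : φ (x + π) - φ x - ((x + π) * φ (x + π) - (x - π) * φ (x - π)) / (2 * π)
        = -φ x := by
      rw [hφshift x]
      field_simp
      ring
    rw [← hval]
    exact H
  have hKE : Kconv φ = Efun φ := funext (Kconv_eq φ hφc hφp)
  have hderiv1 : deriv (Efun φ) = Gfun φ := funext fun x => (hE x).deriv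
  have hderiv2 : deriv (Gfun φ) = fun x => -φ x := funext fun x => (hG x).deriv
  constructor
  · rw [hKE]
    rw [show (2 : WithTop ℕ∞) = 1 + 1 from rfl]
    rw [contDiff_succ_iff_deriv]
    refine ⟨fun x => (hE x).differentiableAt, by simp, ?_⟩
    rw [hderiv1, contDiff_one_iff_deriv]
    exact ⟨fun x => (hG x).differentiableAt, by rw [hderiv2]; exact hφc.neg⟩
  · intro x
    rw [hKE, hderiv1, hderiv2]
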